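/- For every real λ > 1 and every L ∈ ℕ: F_L(λ) ≥ 2·E_L(log, [1/λ, 1]), where F_L(λ) = sup{ E[φ(U)] − E[φ(U')] : U, U' random variables with values in [0,λ], E[U] = E[U'] = 1, and E[U^j] = E[U'^j] for j = 1,...,L }. -/

import Mathlib

open scoped BigOperators
open Real MeasureTheory

noncomputable section

/-- `φ(x) = x log (1/x)`, with `φ(0) = 0`. -/
def phi (x : ℝ) : ℝ := x * Real.log (1 / x)

/-- Best uniform polynomial approximation error of `f` on `[a,b]` by polynomials of
degree at most `L`. -/
def bestApproxError (L : ℕ) (f : ℝ → ℝ) (a b : ℝ) : ℝ :=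
  ⨅ p : {p : Polynomial ℝ // p.natDegree ≤ L},
    ⨆ x : Set.Icc a b, |f ↑x - Polynomial.eval (↑x : ℝ) p.1|

/-- `F_L(λ)`: maximal separation of `E[φ(U)] − E[φ(U')]` over pairs of unit-mean random
variables on `[0,λ]` with matching moments up to degree `L`. -/
def FL (L : ℕ) (lam : ℝ) : ℝ :=
  sSup {d : ℝ | ∃ μ μ' : Measure ℝ,
    IsProbabilityMeasure μ ∧ IsProbabilityMeasure μ' ∧
    (∀ᵐ x ∂μ, x ∈ Set.Icc 0 lam) ∧ (∀ᵐ x ∂μ', x ∈ Set.Icc 0 lam) ∧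
    (∫ x, x ∂μ) = 1 ∧ (∫ x, x ∂μ') = 1 ∧
    (∀ j : ℕ, 1 ≤ j → j ≤ L → ∫ x, x ^ j ∂μ = ∫ x, x ^ j ∂μ') ∧
    d = (∫ x, phi x ∂μ) - ∫ x, phi x ∂μ'}

/-! ### Auxiliary lemmas -/

section Aux

open Finset Polynomial

lemma sum_fin_pad {β : Type*} [AddCommMonoid β] {m n : ℕ} (h : m ≤ n) (F : Fin m → β) :
    (∑ i : Fin n, if hi : (i : ℕ) < m then F ⟨i, hi⟩ else 0) = ∑ i : Fin m, F i := by
  set g : ℕ → β := fun i => if hi : i < m then F ⟨i, hi⟩ else 0 with hg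
  have h1 : (∑ i : Fin n, if hi : (i : ℕ) < m then F ⟨i, hi⟩ else 0) = ∑ i ∈ range n, g i :=
    Fin.sum_univ_eq_sum_range g n
  have h2 : ∑ i ∈ range m, g i = ∑ i ∈ range n, g i := by
    refine Finset.sum_subset (Finset.range_subset_range.2 h) ?_
    intro x _ hx
    rw [Finset.mem_range] at hx
    simp [g, hx]
  have h3 : ∑ i ∈ range m, g i = ∑ i : Fin m, F i := by
    rw [← Fin.sum_univ_eq_sum_range g m]
    exact Finset.sum_congr rfl fun i _ => by simp [g, i.isLt]
  rw [h1, ← h2, h3]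

lemma finset_sum_equivFin {ι : Type*} {β : Type*} [AddCommMonoid β] (t : Finset ι) (F : ι → β) :
    ∑ i ∈ t, F i = ∑ i : Fin t.card, F ↑(t.equivFin.symm i) := by
  rw [← Finset.sum_coe_sort t F]
  exact (Equiv.sum_comp t.equivFin.symm (fun i : ↥t => F ↑i)).symm

/-- The convex hull of a compact set in a finite-dimensional normed space is compact. -/
lemma isCompact_convexHull_fd {V : Type} [NormedAddCommGroup V] [NormedSpace ℝ V]
    [FiniteDimensional ℝ V] {s : Set V} (hs : IsCompact s) :
    IsCompact (convexHull ℝ s) := by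
  rcases s.eq_empty_or_nonempty with rfl | ⟨e₀, he₀⟩
  · simp
  set n := Module.finrank ℝ V + 1 with hn
  set T : (Fin n → ℝ) × (Fin n → V) → V := fun p => ∑ i : Fin n, p.1 i • p.2 i with hT
  have hTcont : Continuous T := by
    refine continuous_finset_sum _ fun i _ => ?_
    exact ((continuous_apply i).comp continuous_fst).smul ((continuous_apply i).comp continuous_snd)
  set D : Set ((Fin n → ℝ) × (Fin n → V)) := (stdSimplex ℝ (Fin n)) ×ˢ (Set.univ.pi fun _ => s)
    with hD
  have hDcomp : IsCompact D := (isCompact_stdSimplex (𝕜 := ℝ) (ι := Fin n)).prod (isCompact_univ_pi fun _ => hs)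
  have himg : convexHull ℝ s = T '' D := by
    apply Set.Subset.antisymm
    · intro x hx
      rw [convexHull_eq_union] at hx
      simp only [Set.mem_iUnion] at hx
      obtain ⟨t, hts, hai, hxt⟩ := hx
      have hcard : t.card ≤ n := by
        have h1 := hai.card_le_finrank_succ
        rw [Fintype.card_coe] at h1
        exact h1.trans (by exact Nat.succ_le_succ (Submodule.finrank_le _))
      rw [Finset.convexHull_eq] at hxt
      obtain ⟨w, hw0, hw1, hcm⟩ := hxt
      set e : Fin t.card → V := fun i => ↑(t.equivFin.symm i) with he
      have het : ∀ i, e i ∈ t := fun i => (t.equivFin.symm i).2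
      set w' : Fin n → ℝ := fun i => if hi : (i : ℕ) < t.card then w (e ⟨i, hi⟩) else 0 with hw'
      set y' : Fin n → V := fun i => if hi : (i : ℕ) < t.card then e ⟨i, hi⟩ else e₀ with hy'
      refine ⟨⟨w', y'⟩, ⟨⟨fun i => ?_, ?_⟩, fun i _ => ?_⟩, ?_⟩
      · dsimp only [w']
        split_ifs with hi
        · exact hw0 _ (het _)
        · exact le_refl 0
      · have : ∑ i : Fin n, w' i = ∑ i : Fin t.card, w (e i) := by
          simp only [hw']
          exact sum_fin_pad hcard (fun j => w (e j))
        rw [this, ← finset_sum_equivFin t w, hw1]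
      · dsimp only [y']
        split_ifs with hi
        · exact hts (het _)
        · exact he₀
      · have hterm : ∀ i : Fin n, w' i • y' i =
            (if hi : (i : ℕ) < t.card then w (e ⟨i, hi⟩) • e ⟨i, hi⟩ else 0) := by
          intro i
          by_cases hi : (i : ℕ) < t.card <;> simp [w', y', hi]
        calc T (w', y') = ∑ i : Fin n, (if hi : (i : ℕ) < t.card
              then w (e ⟨i, hi⟩) • e ⟨i, hi⟩ else 0) := Finset.sum_congr rfl fun i _ => hterm i
          _ = ∑ i : Fin t.card, w (e i) • e i := sum_fin_pad hcard (fun j => w (e j) • e j)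
          _ = ∑ i ∈ t, w i • i := (finset_sum_equivFin t (fun z => w z • z)).symm
          _ = t.centerMass w id := (Finset.centerMass_eq_of_sum_1 t id hw1).symm
          _ = x := hcm
    · rintro x ⟨⟨w, y⟩, ⟨⟨hw0, hw1⟩, hy⟩, rfl⟩
      have : T (w, y) = Finset.univ.centerMass w y := by
        rw [Finset.centerMass_eq_of_sum_1 _ y hw1]
      rw [this]
      exact Finset.centerMass_mem_convexHull _ (fun i _ => hw0 i) (by rw [hw1]; norm_num)
        (fun i _ => hy i (Set.mem_univ i))
  rw [himg]
  exact hDcomp.image hTcont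

lemma mem_convexHull_fin {V : Type*} [AddCommGroup V] [Module ℝ V] {s : Set V} {p : V}
    (hp : p ∈ convexHull ℝ s) :
    ∃ (n : ℕ) (w : Fin n → ℝ) (y : Fin n → V),
      (∀ i, 0 ≤ w i) ∧ (∑ i, w i) = 1 ∧ (∀ i, y i ∈ s) ∧ (∑ i, w i • y i) = p := by
  rw [_root_.convexHull_eq] at hp
  obtain ⟨ι, t, w, z, hw0, hw1, hz, hcm⟩ := hp
  refine ⟨t.card, fun i => w ↑(t.equivFin.symm i), fun i => z ↑(t.equivFin.symm i),
    fun i => hw0 _ (t.equivFin.symm i).2, ?_, fun i => hz _ (t.equivFin.symm i).2, ?_⟩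
  · rw [← finset_sum_equivFin t w, hw1]
  · rw [← finset_sum_equivFin t (fun i => w i • z i)]
    rw [Finset.centerMass_eq_of_sum_1 t z hw1] at hcm
    exact hcm

/-- Duality: there exist finitely supported probability vectors on `[a,b]` with matching
moments up to degree `M` whose `f`-separation nearly reaches `2 E_M(f,[a,b])`. -/
lemma exists_moment_matching (M : ℕ) (f : ℝ → ℝ) {a b : ℝ} (hab : a < b)
    (hf : ContinuousOn f (Set.Icc a b)) {ε : ℝ} (hε : 0 < ε) :
    ∃ (n n' : ℕ) (w : Fin n → ℝ) (x : Fin n → ℝ) (w' : Fin n' → ℝ) (x' : Fin n' → ℝ),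
      (∀ i, 0 ≤ w i) ∧ (∀ i, 0 ≤ w' i) ∧ (∑ i, w i) = 1 ∧ (∑ i, w' i) = 1 ∧
      (∀ i, x i ∈ Set.Icc a b) ∧ (∀ i, x' i ∈ Set.Icc a b) ∧
      (∀ j : ℕ, j ≤ M → ∑ i, w i * (x i)^j = ∑ i, w' i * (x' i)^j) ∧
      2 * bestApproxError M f a b - ε ≤ (∑ i, w' i * f (x' i)) - ∑ i, w i * f (x i) := by
  set E := bestApproxError M f a b with hE
  have hIccne : (Set.Icc a b).Nonempty := Set.nonempty_Icc.2 hab.le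
  haveI : Nonempty (Set.Icc a b) := hIccne.to_subtype
  rcases le_or_gt (E - ε/2) 0 with hEε | hEε
  · refine ⟨1, 1, fun _ => 1, fun _ => a, fun _ => 1, fun _ => a, fun _ => zero_le_one,
      fun _ => zero_le_one, by simp, by simp, fun _ => Set.left_mem_Icc.2 hab.le,
      fun _ => Set.left_mem_Icc.2 hab.le, fun j _ => rfl, by simp; linarith⟩
  · by_contra hcon
    set c : ℝ := E - ε/2 with hc
    -- ambient space
    set m : ℝ → (Fin (M+1) → ℝ) × ℝ := fun t => (fun j => t ^ (j : ℕ), f t) with hm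
    set S₀ : Set ((Fin (M+1) → ℝ) × ℝ) := m '' Set.Icc a b with hS₀
    have hS₀comp : IsCompact S₀ := by
      apply isCompact_Icc.image_of_continuousOn
      refine ContinuousOn.prodMk ?_ hf
      exact continuousOn_pi.2 fun j => (continuous_pow (j : ℕ)).continuousOn
    set K : Set ((Fin (M+1) → ℝ) × ℝ) := convexHull ℝ S₀ with hK
    have hKcomp : IsCompact K := isCompact_convexHull_fd hS₀comp
    have hKconv : Convex ℝ K := convex_convexHull ℝ S₀
    set z : (Fin (M+1) → ℝ) × ℝ := (0, 1) with hz
    set K₁ := (fun p => -(c • z) + p) '' K with hK₁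
    set K₂ := (fun p => (c • z) + p) '' K with hK₂
    have hK₁comp : IsCompact K₁ := hKcomp.image (continuous_const.add continuous_id)
    have hK₂comp : IsCompact K₂ := hKcomp.image (continuous_const.add continuous_id)
    have hK₁conv : Convex ℝ K₁ := hKconv.translate _
    have hK₂conv : Convex ℝ K₂ := hKconv.translate _
    -- extract finite combination representation of a member of K
    have hrep : ∀ p ∈ K, ∃ (n : ℕ) (w : Fin n → ℝ) (x : Fin n → ℝ),
        (∀ i, 0 ≤ w i) ∧ (∑ i, w i) = 1 ∧ (∀ i, x i ∈ Set.Icc a b) ∧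
        (∀ j : ℕ, ∀ hj : j < M + 1, ∑ i, w i * (x i)^j = p.1 ⟨j, hj⟩) ∧
        (∑ i, w i * f (x i)) = p.2 := by
      intro p hp
      obtain ⟨n, w, y, hw0, hw1, hy, hsum⟩ := mem_convexHull_fin hp
      have : ∀ i, ∃ u ∈ Set.Icc a b, m u = y i := fun i => hy i
      choose x hxmem hxeq using this
      refine ⟨n, w, x, hw0, hw1, hxmem, ?_, ?_⟩
      · intro j hj
        have := congrArg (fun q => q.1 ⟨j, hj⟩) hsum
        simp only [Prod.fst_sum, Finset.sum_apply] at this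
        rw [← this]
        refine Finset.sum_congr rfl fun i _ => ?_
        rw [← hxeq i]
        simp [m, mul_comm]
      · have := congrArg (fun q => q.2) hsum
        simp only [Prod.snd_sum] at this
        rw [← this]
        refine Finset.sum_congr rfl fun i _ => ?_
        rw [← hxeq i]
        simp [m, mul_comm]
    -- disjointness
    have hdisj : Disjoint K₁ K₂ := by
      rw [Set.disjoint_left]
      rintro p ⟨q₂, hq₂, hq₂e⟩ ⟨q₁, hq₁, hq₁e⟩
      have hq₂p : q₂ = c • z + p := by
        have h : -(c • z) + q₂ = p := hq₂e
        rw [← h]; abel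
      have hq₁p : q₁ = -(c • z) + p := by
        have h : (c • z) + q₁ = p := hq₁e
        rw [← h]; abel
      obtain ⟨n', w', x', hw'0, hw'1, hx'mem, hmom', hval'⟩ := hrep q₂ hq₂
      obtain ⟨n, w, x, hw0, hw1, hxmem, hmom, hval⟩ := hrep q₁ hq₁
      refine hcon ⟨n, n', w, x, w', x', hw0, hw'0, hw1, hw'1, hxmem, hx'mem, ?_, ?_⟩
      · intro j hj
        have hj' : j < M + 1 := Nat.lt_succ_of_le hj
        rw [hmom j hj', hmom' j hj', hq₁p, hq₂p]
        simp [z]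
      · have h2 : (∑ i, w' i * f (x' i)) = p.2 + c := by
          rw [hval', hq₂p]; simp [z]; ring
        have h1 : (∑ i, w i * f (x i)) = p.2 - c := by
          rw [hval, hq₁p]; simp [z]; ring
        rw [h1, h2, hc]; ring_nf; linarith
    obtain ⟨F, u, v, hFu, huv, hFv⟩ :=
      geometric_hahn_banach_compact_closed hK₁conv hK₁comp hK₂conv hK₂comp.isClosed hdisj
    set β : ℝ := F z with hβ
    have hmK : ∀ s ∈ Set.Icc a b, m s ∈ K := fun s hs =>
      subset_convexHull ℝ S₀ ⟨s, hs, rfl⟩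
    have hlow : ∀ s ∈ Set.Icc a b, F (m s) - c * β < u := by
      intro s hs
      have h := hFu _ ⟨m s, hmK s hs, rfl⟩
      simp only [map_add, map_neg, _root_.map_smul, smul_eq_mul] at h
      rw [hβ]; linarith
    have hhigh : ∀ s ∈ Set.Icc a b, v < F (m s) + c * β := by
      intro s hs
      have h := hFv _ ⟨m s, hmK s hs, rfl⟩
      simp only [map_add, _root_.map_smul, smul_eq_mul] at h
      rw [hβ]; linarith
    have hβpos : 0 < β := by
      obtain ⟨s, hs⟩ := hIccne
      have h1 := hlow s hs
      have h2 := hhigh s hs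
      have hc0 : 0 < c := hEε
      nlinarith
    set Glin : (Fin (M+1) → ℝ) →ₗ[ℝ] ℝ := F.toLinearMap.comp (LinearMap.inl ℝ _ ℝ) with hGlin
    have hFsplit : ∀ s : ℝ, F (m s) = Glin (fun j => s ^ (j:ℕ)) + f s * β := by
      intro s
      have hdecomp : m s = ((fun j => s ^ (j:ℕ), 0) : (Fin (M+1) → ℝ) × ℝ) + f s • z := by
        simp [m, z, Prod.ext_iff]
      rw [hdecomp, map_add, _root_.map_smul, smul_eq_mul]
      rfl
    -- the polynomial
    set P : Polynomial ℝ := ∑ j : Fin (M+1),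
      Polynomial.C ((if j = (0 : Fin (M+1)) then u/β else 0)
        - Glin (fun k => if j = k then 1 else 0)/β) * X ^ (j:ℕ) with hP
    have hPdeg : P.natDegree ≤ M :=
      Polynomial.natDegree_sum_le_of_forall_le _ _ fun j _ =>
        (Polynomial.natDegree_C_mul_X_pow_le _ _).trans j.is_le
    have hPeval : ∀ s : ℝ, P.eval s = u/β - Glin (fun j => s ^ (j:ℕ))/β := by
      intro s
      have hexp := LinearMap.pi_apply_eq_sum_univ Glin (fun j : Fin (M+1) => s ^ (j:ℕ))
      rw [hP, Polynomial.eval_finset_sum]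
      simp only [Polynomial.eval_mul, Polynomial.eval_C, Polynomial.eval_pow, Polynomial.eval_X]
      have step1 : ∀ j : Fin (M+1), ((if j = (0 : Fin (M+1)) then u/β else 0)
          - Glin (fun k => if j = k then 1 else 0)/β) * s ^ (j:ℕ)
          = (if j = (0 : Fin (M+1)) then u/β * s^(j:ℕ) else 0)
            - (s^(j:ℕ) • Glin (fun k => if j = k then 1 else 0))/β := by
        intro j
        by_cases hj : j = (0 : Fin (M+1)) <;> simp [hj, smul_eq_mul] <;> ring
      rw [Finset.sum_congr rfl fun j _ => step1 j, Finset.sum_sub_distrib, ← Finset.sum_div,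
        ← hexp, Finset.sum_ite_eq' Finset.univ (0 : Fin (M+1)) (fun j => u/β * s^(j:ℕ))]
      simp
    -- the approximation bound
    have habs : ∀ s ∈ Set.Icc a b, |f s - P.eval s| ≤ c := by
      intro s hs
      have h1 := hlow s hs
      have h2 := hhigh s hs
      rw [hFsplit] at h1 h2
      rw [hPeval]
      set G := Glin (fun j => s ^ (j:ℕ)) with hG
      have hd : u/β - G/β = (u - G)/β := by ring
      rw [abs_le]
      constructor
      · have hr : (f s + c) * β = f s * β + c * β := by ring
        have h3 : u - G < (f s + c) * β := by linarith
        have h4 : (u - G)/β < f s + c := (div_lt_iff₀ hβpos).mpr h3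
        linarith
      · have hr : (f s - c) * β = f s * β - c * β := by ring
        have h3 : (f s - c) * β < u - G := by linarith
        have h4 : f s - c < (u - G)/β := (lt_div_iff₀ hβpos).mpr h3
        linarith
    -- contradiction with the best approximation error
    have hbdd : BddBelow (Set.range fun p : {p : Polynomial ℝ // p.natDegree ≤ M} =>
        ⨆ x : Set.Icc a b, |f ↑x - Polynomial.eval (↑x:ℝ) p.1|) := by
      refine ⟨0, ?_⟩
      rintro r ⟨p, rfl⟩
      exact Real.iSup_nonneg fun x => abs_nonneg _
    have hsup : (⨆ x : Set.Icc a b, |f ↑x - Polynomial.eval (↑x:ℝ) P|) ≤ c :=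
      ciSup_le fun x => habs ↑x x.2
    have hEle : E ≤ c := by
      rw [hE]
      exact ciInf_le_of_le hbdd ⟨P, hPdeg⟩ hsup
    rw [hc] at hEle
    linarith

lemma bestApproxError_mono {K L : ℕ} (h : K ≤ L) (f : ℝ → ℝ) (a b : ℝ) :
    bestApproxError L f a b ≤ bestApproxError K f a b := by
  have hbdd : BddBelow (Set.range fun p : {p : Polynomial ℝ // p.natDegree ≤ L} =>
      ⨆ x : Set.Icc a b, |f ↑x - Polynomial.eval (↑x:ℝ) p.1|) := by
    refine ⟨0, ?_⟩
    rintro r ⟨p, rfl⟩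
    exact Real.iSup_nonneg fun x => abs_nonneg _
  haveI : Nonempty {p : Polynomial ℝ // p.natDegree ≤ K} := ⟨⟨0, by simp⟩⟩
  apply le_ciInf
  intro p
  exact ciInf_le_of_le hbdd ⟨p.1, p.2.trans h⟩ le_rfl

lemma continuous_phi : Continuous phi := by
  have : phi = fun t => -(t * Real.log t) := by
    funext t
    simp only [phi, one_div, Real.log_inv]
    ring
  rw [this]
  exact Real.continuous_mul_log.neg

lemma integrable_dirac'' (g : ℝ → ℝ) (a : ℝ) : Integrable g (Measure.dirac a) := by
  constructor
  · refine ⟨fun _ => g a, stronglyMeasurable_const, ?_⟩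
    rw [Filter.EventuallyEq, ae_dirac_eq]
    exact Filter.eventually_pure.2 rfl
  · rw [HasFiniteIntegral, lintegral_dirac]
    exact ENNReal.coe_lt_top

/-- A finitely supported measure. -/
def finMeas {n : ℕ} (v : Fin n → ℝ) (y : Fin n → ℝ) : Measure ℝ :=
  ∑ i : Fin n, ENNReal.ofReal (v i) • Measure.dirac (y i)

lemma finMeas_prob {n : ℕ} {v : Fin n → ℝ} {y : Fin n → ℝ} (hv : ∀ i, 0 ≤ v i)
    (hsum : ∑ i, v i = 1) : IsProbabilityMeasure (finMeas v y) := by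
  constructor
  rw [finMeas, Measure.finset_sum_apply]
  simp only [Measure.smul_apply, measure_univ, smul_eq_mul, mul_one]
  rw [← ENNReal.ofReal_sum_of_nonneg (fun i _ => hv i), hsum, ENNReal.ofReal_one]

lemma finMeas_integral {n : ℕ} {v : Fin n → ℝ} (y : Fin n → ℝ) (hv : ∀ i, 0 ≤ v i) (g : ℝ → ℝ) :
    ∫ x, g x ∂(finMeas v y) = ∑ i, v i * g (y i) := by
  rw [finMeas, integral_finset_sum_measure
    (fun i _ => (integrable_dirac'' g (y i)).smul_measure ENNReal.ofReal_ne_top)]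
  refine Finset.sum_congr rfl fun i _ => ?_
  rw [integral_smul_measure, integral_dirac, ENNReal.toReal_ofReal (hv i), smul_eq_mul]

lemma finMeas_ae {n : ℕ} {v : Fin n → ℝ} {y : Fin n → ℝ} {s : Set ℝ} (hms : MeasurableSet s)
    (hy : ∀ i, y i ∈ s) : ∀ᵐ x ∂(finMeas v y), x ∈ s := by
  rw [ae_iff]
  have h0 : {x : ℝ | ¬ x ∈ s} = sᶜ := rfl
  rw [h0, finMeas, Measure.finset_sum_apply]
  refine Finset.sum_eq_zero fun i _ => ?_
  rw [Measure.smul_apply, Measure.dirac_apply' _ hms.compl]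
  have : y i ∉ sᶜ := fun h => h (hy i)
  rw [Set.indicator_of_notMem this]
  simp

/-- From a discrete probability vector on `[1/λ,1]`, build a probability measure on `[0,λ]`
with unit mean whose higher moments and `φ`-integral are explicit. -/
lemma build_measure (lam : ℝ) (hlam : 1 < lam) {n : ℕ} (w x : Fin n → ℝ)
    (hw0 : ∀ i, 0 ≤ w i) (hw1 : ∑ i, w i = 1) (hxm : ∀ i, x i ∈ Set.Icc (1/lam) 1) :
    ∃ μ : Measure ℝ, IsProbabilityMeasure μ ∧ (∀ᵐ t ∂μ, t ∈ Set.Icc 0 lam) ∧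
      (∫ t, t ∂μ) = 1 ∧
      (∀ j : ℕ, 1 ≤ j → ∫ t, t^j ∂μ = lam^(j-1) * ∑ i, w i * (x i)^(j-1)) ∧
      (∫ t, phi t ∂μ) = -Real.log lam - ∑ i, w i * Real.log (x i) := by
  have hlam0 : (0:ℝ) < lam := lt_trans one_pos hlam
  have hx0 : ∀ i, 0 < x i := fun i => lt_of_lt_of_le (by positivity) (hxm i).1
  have hlx1 : ∀ i, 1 ≤ lam * x i := by
    intro i
    have h := (hxm i).1
    calc (1:ℝ) = lam * (1/lam) := by field_simp
      _ ≤ lam * x i := mul_le_mul_of_nonneg_left h hlam0.le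
  have hlx0 : ∀ i, 0 < lam * x i := fun i => lt_of_lt_of_le one_pos (hlx1 i)
  have hlxlam : ∀ i, lam * x i ≤ lam := fun i => by nlinarith [(hxm i).2]
  set S := ∑ i, w i / (lam * x i) with hS
  have hSle : S ≤ 1 := by
    rw [hS, ← hw1]
    exact Finset.sum_le_sum fun i _ => div_le_self (hw0 i) (hlx1 i)
  set v : Fin (n+1) → ℝ := Fin.snoc (fun i => w i / (lam * x i)) (1 - S) with hv
  set y : Fin (n+1) → ℝ := Fin.snoc (fun i => lam * x i) 0 with hy
  have hv0 : ∀ i, 0 ≤ v i := by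
    intro i
    refine Fin.lastCases ?_ ?_ i
    · simp only [hv, Fin.snoc_last]
      linarith
    · intro i
      simp only [hv, Fin.snoc_castSucc]
      exact div_nonneg (hw0 i) (hlx0 i).le
  have hv1 : ∑ i, v i = 1 := by
    rw [Fin.sum_univ_castSucc]
    simp only [hv, Fin.snoc_castSucc, Fin.snoc_last]
    rw [← hS]
    ring
  have hym : ∀ i, y i ∈ Set.Icc (0:ℝ) lam := by
    intro i
    refine Fin.lastCases ?_ ?_ i
    · simp only [hy, Fin.snoc_last]
      exact ⟨le_rfl, hlam0.le⟩
    · intro i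
      simp only [hy, Fin.snoc_castSucc]
      exact ⟨(hlx0 i).le, hlxlam i⟩
  refine ⟨finMeas v y, finMeas_prob hv0 hv1, finMeas_ae measurableSet_Icc hym, ?_, ?_, ?_⟩
  · rw [finMeas_integral y hv0 (fun t => t), Fin.sum_univ_castSucc]
    simp only [hv, hy, Fin.snoc_castSucc, Fin.snoc_last, mul_zero, add_zero]
    rw [Finset.sum_congr rfl fun i _ => div_mul_cancel₀ (w i) (hlx0 i).ne']
    exact hw1
  · intro j hj
    obtain ⟨k, rfl⟩ : ∃ k, j = k + 1 := ⟨j - 1, (Nat.succ_pred_eq_of_pos hj).symm⟩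
    rw [finMeas_integral y hv0 (fun t => t^(k+1)), Fin.sum_univ_castSucc]
    simp only [hv, hy, Fin.snoc_castSucc, Fin.snoc_last]
    rw [zero_pow (Nat.succ_ne_zero k), mul_zero, add_zero]
    have hterm : ∀ i : Fin n, w i / (lam * x i) * (lam * x i)^(k+1)
        = lam^k * (w i * (x i)^k) := by
      intro i
      have hne : lam * x i ≠ 0 := (hlx0 i).ne'
      rw [div_mul_eq_mul_div, mul_div_assoc, pow_succ, mul_div_cancel_right₀ _ hne, mul_pow]
      ring
    rw [Finset.sum_congr rfl fun i _ => hterm i, ← Finset.mul_sum]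
    simp
  · rw [finMeas_integral y hv0 phi, Fin.sum_univ_castSucc]
    simp only [hv, hy, Fin.snoc_castSucc, Fin.snoc_last]
    have hphi0 : phi 0 = 0 := by simp [phi]
    rw [hphi0, mul_zero, add_zero]
    have hterm : ∀ i : Fin n, w i / (lam * x i) * phi (lam * x i)
        = -(w i * Real.log lam) - w i * Real.log (x i) := by
      intro i
      have : phi (lam * x i) = (lam * x i) * (-(Real.log lam + Real.log (x i))) := by
        simp only [phi, one_div, Real.log_inv]
        rw [Real.log_mul hlam0.ne' (hx0 i).ne']
      rw [this]
      have hne : lam * x i ≠ 0 := (hlx0 i).ne'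
      rw [div_mul_eq_mul_div, mul_div_assoc, mul_div_cancel_left₀ _ hne]
      ring
    rw [Finset.sum_congr rfl fun i _ => hterm i, Finset.sum_sub_distrib]
    have h2 : (∑ i : Fin n, -(w i * Real.log lam)) = -Real.log lam := by
      rw [Finset.sum_neg_distrib, ← Finset.sum_mul, hw1, one_mul]
    rw [h2]

end Aux

/-- `F_L(λ) ≥ 2·E_L(log, [1/λ, 1])`. -/
theorem FL_ge_two_approx_error (lam : ℝ) (hlam : 1 < lam) (L : ℕ) :
    2 * bestApproxError L Real.log (1 / lam) 1 ≤ FL L lam := by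
  have hlam0 : (0:ℝ) < lam := lt_trans one_pos hlam
  have hab : 1 / lam < 1 := (div_lt_one hlam0).mpr hlam
  have hlogc : ContinuousOn Real.log (Set.Icc (1/lam) 1) := by
    apply Real.continuousOn_log.mono
    intro t ht
    simp only [Set.mem_compl_iff, Set.mem_singleton_iff]
    have h0 : (0:ℝ) < 1/lam := by positivity
    exact ne_of_gt (lt_of_lt_of_le h0 ht.1)
  obtain ⟨C, hC⟩ := (isCompact_Icc (a := (0:ℝ)) (b := lam)).exists_bound_of_continuousOn
    continuous_phi.continuousOn
  set SS := {d : ℝ | ∃ μ μ' : Measure ℝ,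
    IsProbabilityMeasure μ ∧ IsProbabilityMeasure μ' ∧
    (∀ᵐ x ∂μ, x ∈ Set.Icc 0 lam) ∧ (∀ᵐ x ∂μ', x ∈ Set.Icc 0 lam) ∧
    (∫ x, x ∂μ) = 1 ∧ (∫ x, x ∂μ') = 1 ∧
    (∀ j : ℕ, 1 ≤ j → j ≤ L → ∫ x, x ^ j ∂μ = ∫ x, x ^ j ∂μ') ∧
    d = (∫ x, phi x ∂μ) - ∫ x, phi x ∂μ'} with hSS
  have hFL : FL L lam = sSup SS := rfl
  have hbdd : BddAbove SS := by
    refine ⟨C + C, ?_⟩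
    rintro d ⟨μ, μ', hμP, hμ'P, hμae, hμ'ae, -, -, -, rfl⟩
    haveI := hμP
    haveI := hμ'P
    have b1 : ‖∫ t, phi t ∂μ‖ ≤ C * (μ Set.univ).toReal :=
      norm_integral_le_of_norm_le_const (by filter_upwards [hμae] with t ht using hC t ht)
    have b2 : ‖∫ t, phi t ∂μ'‖ ≤ C * (μ' Set.univ).toReal :=
      norm_integral_le_of_norm_le_const (by filter_upwards [hμ'ae] with t ht using hC t ht)
    rw [measure_univ, ENNReal.toReal_one, mul_one] at b1 b2
    have hb1 := abs_le.mp b1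
    have hb2 := abs_le.mp b2
    exact sub_le_iff_le_add.mpr (by linarith [hb1.2, hb2.1])
  refine le_of_forall_pos_le_add fun ε hε => ?_
  obtain ⟨n, n', w, x, w', x', hw0, hw'0, hw1, hw'1, hxm, hx'm, hmom, hineq⟩ :=
    exists_moment_matching (L - 1) Real.log hab hlogc hε
  obtain ⟨μ, hμP, hμae, hμmean, hμmom, hμphi⟩ := build_measure lam hlam w x hw0 hw1 hxm
  obtain ⟨μ', hμ'P, hμ'ae, hμ'mean, hμ'mom, hμ'phi⟩ := build_measure lam hlam w' x' hw'0 hw'1 hx'm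
  set d : ℝ := (∫ t, phi t ∂μ) - ∫ t, phi t ∂μ' with hd
  have hdmem : d ∈ SS := by
    refine ⟨μ, μ', hμP, hμ'P, hμae, hμ'ae, hμmean, hμ'mean, ?_, rfl⟩
    intro j hj1 hjL
    rw [hμmom j hj1, hμ'mom j hj1, hmom (j - 1) (by omega)]
  have hdge : 2 * bestApproxError (L - 1) Real.log (1/lam) 1 - ε ≤ d := by
    have heq : d = (∑ i, w' i * Real.log (x' i)) - ∑ i, w i * Real.log (x i) := by
      rw [hd, hμphi, hμ'phi]
      ring
    rw [heq]
    exact hineq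
  have hmono := bestApproxError_mono (Nat.sub_le L 1) Real.log (1/lam) 1
  have hle : d ≤ FL L lam := by
    rw [hFL]
    exact le_csSup hbdd hdmem
  linarith
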